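/- Let 𝒱 ⊂ ℝ^d be finite with Span(𝒱) = ℝ^d, ∑_{v∈𝒱} v = 0, and C_𝒱 the optimal constant of the Minkowski-type optimization. For any real numbers (b_v)_{v∈𝒱}, the intersection ⋂_{v∈𝒱} {p : ⟨p,v⟩ ≤ b_v} has Lebesgue volume at most C_𝒱 (∑_{v∈𝒱} b_v)^d when ∑_v b_v > 0 (and volume 0 when ∑_v b_v ≤ 0 and the intersection is nonempty with finite volume—i.e., the scaling-invariant inequality vol ≤ C_𝒱 (∑_v b_v)_+^d holds whenever the volume is finite). -/

import Mathlib

open MeasureTheory Pointwise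
open scoped RealInnerProductSpace ENNReal

/-- The polyhedron `⋂_{v ∈ 𝒱} {p : ⟨p,v⟩ ≤ b v}`. -/
def Rset {d : ℕ} (𝒱 : Finset (EuclideanSpace ℝ (Fin d)))
    (b : EuclideanSpace ℝ (Fin d) → ℝ) : Set (EuclideanSpace ℝ (Fin d)) :=
  {p | ∀ v ∈ 𝒱, ⟪p, v⟫ ≤ b v}

/-- The generalized arithmetic–geometric inequality (3.1): if `𝒱` spans and has
zero sum, and `C` is the optimal constant of the Minkowski-type optimization
(greatest volume under `∑ c_v = 1`), then for arbitrary levels `b_v` one has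
`vol(⋂_v H_v(b_v)) ≤ C (∑_v b_v)₊^d` whenever the volume is finite. -/
theorem stmt19 {d : ℕ} (𝒱 : Finset (EuclideanSpace ℝ (Fin d)))
    (hspan : Submodule.span ℝ (𝒱 : Set (EuclideanSpace ℝ (Fin d))) = ⊤)
    (hsum : ∑ v ∈ 𝒱, v = 0)
    (C : ℝ≥0∞)
    (hC : IsGreatest
      ((fun c : EuclideanSpace ℝ (Fin d) → ℝ => volume (Rset 𝒱 c)) ''
        {c | ∑ v ∈ 𝒱, c v = 1}) C)
    (b : EuclideanSpace ℝ (Fin d) → ℝ)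
    (hfin : volume (Rset 𝒱 b) ≠ ⊤) :
    volume (Rset 𝒱 b) ≤ C * (ENNReal.ofReal (∑ v ∈ 𝒱, b v)) ^ d := by
  set S := ∑ v ∈ 𝒱, b v with hS
  rcases Nat.eq_zero_or_pos d with hd | hd
  · -- dimension zero case
    subst hd
    haveI : Subsingleton (EuclideanSpace ℝ (Fin 0)) := by
      constructor; intro a b'; ext i; exact absurd i.2 (Nat.not_lt_zero _)
    obtain ⟨c, hc1, hc2⟩ := hC.1
    have hRc : Rset 𝒱 c = Set.univ := by
      ext p
      simp only [Set.mem_univ, iff_true, Rset, Set.mem_setOf_eq]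
      intro v hv
      have h0 : v = 0 := Subsingleton.elim _ _
      have h𝒱 : 𝒱 = {v} :=
        Finset.eq_singleton_iff_unique_mem.mpr ⟨hv, fun w _ => Subsingleton.elim _ _⟩
      have hc1' : ∑ w ∈ 𝒱, c w = 1 := hc1
      rw [h𝒱, Finset.sum_singleton] at hc1'
      rw [h0] at hc1'
      rw [h0, inner_zero_right, hc1']
      norm_num
    have hCval : C = volume (Set.univ : Set (EuclideanSpace ℝ (Fin 0))) := by
      rw [← hc2]; simp only [hRc]
    calc volume (Rset 𝒱 b)
        ≤ volume (Set.univ : Set (EuclideanSpace ℝ (Fin 0))) :=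
          measure_mono (Set.subset_univ _)
      _ = C * (ENNReal.ofReal S) ^ 0 := by rw [hCval, pow_zero, mul_one]
  · -- positive dimension
    rcases lt_trichotomy S 0 with hS0 | hS0 | hS0
    · -- S < 0 : the set is empty
      have hemp : Rset 𝒱 b = ∅ := by
        ext p
        simp only [Set.mem_empty_iff_false, iff_false, Rset, Set.mem_setOf_eq]
        intro hp
        have h1 : ∑ v ∈ 𝒱, (⟪p, v⟫ : ℝ) ≤ S := Finset.sum_le_sum hp
        have h2 : ∑ v ∈ 𝒱, (⟪p, v⟫ : ℝ) = 0 := by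
          rw [← inner_sum, hsum, inner_zero_right]
        linarith
      simp [hemp]
    · -- S = 0 : contained in a hyperplane
      obtain ⟨v₀, hv₀𝒱, hv₀⟩ : ∃ v₀ ∈ 𝒱, v₀ ≠ 0 := by
        by_contra h
        push_neg at h
        have hsub : (𝒱 : Set (EuclideanSpace ℝ (Fin d))) ⊆ {0} := fun v hv => h v hv
        have hb : Submodule.span ℝ (𝒱 : Set (EuclideanSpace ℝ (Fin d))) ≤ ⊥ := by
          rw [← Submodule.span_zero_singleton (R := ℝ) (M := EuclideanSpace ℝ (Fin d))]
          exact Submodule.span_mono hsub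
        rw [hspan] at hb
        have hss : ∀ x : EuclideanSpace ℝ (Fin d), x = 0 := fun x => by
          simpa using hb (Submodule.mem_top (x := x))
        have h1 := hss (EuclideanSpace.single (⟨0, hd⟩ : Fin d) (1 : ℝ))
        have h2 : (EuclideanSpace.single (⟨0, hd⟩ : Fin d) (1 : ℝ)) ⟨0, hd⟩
            = (0 : EuclideanSpace ℝ (Fin d)) ⟨0, hd⟩ := by rw [h1]
        simp [EuclideanSpace.single_apply] at h2
      rcases (Rset 𝒱 b).eq_empty_or_nonempty with he | ⟨p₀, hp₀⟩
      · simp [he]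
      have key : ∀ q ∈ Rset 𝒱 b, (⟪q, v₀⟫ : ℝ) = b v₀ := by
        intro q hq
        have h2 : ∑ v ∈ 𝒱, (⟪q, v⟫ : ℝ) = 0 := by
          rw [← inner_sum, hsum, inner_zero_right]
        have h3 : ∑ v ∈ 𝒱, (⟪q, v⟫ : ℝ) = ∑ v ∈ 𝒱, b v := by rw [h2, ← hS, hS0]
        exact (Finset.sum_eq_sum_iff_of_le hq).mp h3 v₀ hv₀𝒱
      have hsub : Rset 𝒱 b ⊆ {p : EuclideanSpace ℝ (Fin d) | ⟪p - p₀, v₀⟫ = 0} := by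
        intro p hp
        simp only [Set.mem_setOf_eq, inner_sub_left]
        rw [key p hp, key p₀ hp₀]
        ring
      have hker : volume {p : EuclideanSpace ℝ (Fin d) | ⟪p - p₀, v₀⟫ = 0} = 0 := by
        set K : Submodule ℝ (EuclideanSpace ℝ (Fin d)) :=
          LinearMap.ker ((innerSL ℝ v₀ : EuclideanSpace ℝ (Fin d) →L[ℝ] ℝ) :
            EuclideanSpace ℝ (Fin d) →ₗ[ℝ] ℝ) with hK
        have hset : {p : EuclideanSpace ℝ (Fin d) | ⟪p - p₀, v₀⟫ = 0}
            = (fun p : EuclideanSpace ℝ (Fin d) => p + (-p₀)) ⁻¹' (K : Set (EuclideanSpace ℝ (Fin d))) := by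
          ext p
          simp only [Set.mem_setOf_eq, Set.mem_preimage, hK, SetLike.mem_coe,
            LinearMap.mem_ker, ContinuousLinearMap.coe_coe, innerSL_apply_apply]
          rw [← sub_eq_add_neg, real_inner_comm]
        have hKne : K ≠ ⊤ := by
          intro h
          have hv₀K : v₀ ∈ K := h ▸ Submodule.mem_top
          have h0 : (⟪v₀, v₀⟫ : ℝ) = 0 := by
            simpa [hK, real_inner_self_eq_norm_sq] using hv₀K
          exact hv₀ (inner_self_eq_zero.mp h0)
        rw [hset, measure_preimage_add_right]
        exact Measure.addHaar_submodule volume K hKne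
      have hz : volume (Rset 𝒱 b) = 0 :=
        le_antisymm (hker ▸ measure_mono hsub) zero_le
      simp [hz]
    · -- S > 0 : scaling argument
      set c : EuclideanSpace ℝ (Fin d) → ℝ := fun v => b v / S with hc
      have hc1 : ∑ v ∈ 𝒱, c v = 1 := by
        simp only [hc, ← Finset.sum_div]
        exact div_self (ne_of_gt hS0)
      have hCle : volume (Rset 𝒱 c) ≤ C := hC.2 ⟨c, hc1, rfl⟩
      have hscale : Rset 𝒱 b = S • Rset 𝒱 c := by
        ext p
        rw [Set.mem_smul_set_iff_inv_smul_mem₀ (ne_of_gt hS0)]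
        simp only [Rset, Set.mem_setOf_eq]
        have hiff : ∀ v : EuclideanSpace ℝ (Fin d),
            ((⟪(S⁻¹ • p : EuclideanSpace ℝ (Fin d)), v⟫ : ℝ) ≤ c v) ↔ (⟪p, v⟫ : ℝ) ≤ b v := by
          intro v
          rw [real_inner_smul_left, hc, inv_mul_eq_div]
          exact div_le_div_iff_of_pos_right hS0
        exact ⟨fun hp v hv => (hiff v).mpr (hp v hv), fun hp v hv => (hiff v).mp (hp v hv)⟩
      calc volume (Rset 𝒱 b)
          = ENNReal.ofReal (S ^ Module.finrank ℝ (EuclideanSpace ℝ (Fin d))) * volume (Rset 𝒱 c) := by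
            rw [hscale, Measure.addHaar_smul_of_nonneg volume hS0.le]
        _ = (ENNReal.ofReal S) ^ d * volume (Rset 𝒱 c) := by
            rw [finrank_euclideanSpace_fin, ENNReal.ofReal_pow hS0.le]
        _ ≤ (ENNReal.ofReal S) ^ d * C := mul_le_mul_right hCle _
        _ = C * (ENNReal.ofReal S) ^ d := mul_comm _ _
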